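/- Let P_1,...,P_n be independent random variables with P_j ~ U[0,1] for j in a set H_0, let alpha_1 <= ... <= alpha_n be thresholds with alpha_k/(D + k) <= q (1 - alpha_k)/(n + 1 - k) for a fixed integer D >= 0 and q in (0,1). Let d be the step-down rejection count with these thresholds and V = #{j in H_0 : P_j <= alpha_d among rejected}. Then E[ V / (D + max(d,1)) ] <= q. -/

import Mathlib

open MeasureTheory ProbabilityTheory
open scoped Classical

/-- The step-down rejection count for p-values `x : Fin n → ℝ` with thresholds `α`
(1-indexed): the largest `k ≤ n` such that for every `i ≤ k`, at least `i` of the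
p-values are `≤ α i` (i.e. the `i`-th order statistic is `≤ α i`). -/
noncomputable def stepdownCount (n : ℕ) (x : Fin n → ℝ) (α : ℕ → ℝ) : ℕ :=
  Nat.findGreatest
    (fun k => ∀ i, 1 ≤ i → i ≤ k →
      i ≤ (Finset.univ.filter (fun j : Fin n => x j ≤ α i)).card) n

noncomputable def rminus (n : ℕ) (i : Fin n) (x : Fin n → ℝ) (α : ℕ → ℝ) : ℕ :=
  Nat.findGreatest
    (fun k => ∀ k', 1 ≤ k' → k' ≤ k →
      k' ≤ (Finset.univ.filter (fun j : Fin n => j ≠ i ∧ x j ≤ α k')).card) n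


section FGHelp
variable {P : ℕ → Prop}

lemma fg_le' (inst : DecidablePred P) (b : ℕ) : @Nat.findGreatest P inst b ≤ b :=
  @Nat.findGreatest_le P inst b

lemma fg_spec' (inst : DecidablePred P) {b : ℕ} (h0 : P 0) : P (@Nat.findGreatest P inst b) :=
  @Nat.findGreatest_spec 0 P inst b (Nat.zero_le b) h0

lemma fg_ge' (inst : DecidablePred P) {m b : ℕ} (hmb : m ≤ b) (hm : P m) :
    m ≤ @Nat.findGreatest P inst b :=
  @Nat.le_findGreatest m P inst b hmb hm

end FGHelp

section Det
variable {n : ℕ} {α : ℕ → ℝ} {x : Fin n → ℝ}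

lemma sd_le (x : Fin n → ℝ) : stepdownCount n x α ≤ n :=
  fg_le' (P := (fun k => ∀ i, 1 ≤ i → i ≤ k →
      i ≤ (Finset.univ.filter (fun j : Fin n => x j ≤ α i)).card)) _ n

lemma sd_spec (x : Fin n → ℝ) : ∀ k', 1 ≤ k' → k' ≤ stepdownCount n x α →
    k' ≤ (Finset.univ.filter (fun j : Fin n => x j ≤ α k')).card := by
  exact fg_spec' (P := (fun k => ∀ i, 1 ≤ i → i ≤ k →
      i ≤ (Finset.univ.filter (fun j : Fin n => x j ≤ α i)).card)) _ (by intro k' h1 h0; omega)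

lemma rm_le (i : Fin n) (x : Fin n → ℝ) : rminus n i x α ≤ n :=
  fg_le' (P := (fun k => ∀ k', 1 ≤ k' → k' ≤ k →
      k' ≤ (Finset.univ.filter (fun j : Fin n => j ≠ i ∧ x j ≤ α k')).card)) _ n

lemma rm_spec (i : Fin n) (x : Fin n → ℝ) : ∀ k', 1 ≤ k' → k' ≤ rminus n i x α →
    k' ≤ (Finset.univ.filter (fun j : Fin n => j ≠ i ∧ x j ≤ α k')).card := by
  exact fg_spec' (P := (fun k => ∀ k', 1 ≤ k' → k' ≤ k →
      k' ≤ (Finset.univ.filter (fun j : Fin n => j ≠ i ∧ x j ≤ α k')).card)) _ (by intro k' h1 h0; omega)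

lemma cnt_mono (hmono : Monotone α) (x : Fin n → ℝ) {k l : ℕ} (h : k ≤ l) :
    (Finset.univ.filter (fun j : Fin n => x j ≤ α k)).card ≤
    (Finset.univ.filter (fun j : Fin n => x j ≤ α l)).card := by
  apply Finset.card_le_card
  intro j hj
  simp only [Finset.mem_filter, Finset.mem_univ, true_and] at *
  exact hj.trans (hmono h)

lemma cnt'_le_cnt (i : Fin n) (k : ℕ) :
    (Finset.univ.filter (fun j : Fin n => j ≠ i ∧ x j ≤ α k)).card ≤
    (Finset.univ.filter (fun j : Fin n => x j ≤ α k)).card := by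
  apply Finset.card_le_card
  intro j hj
  simp only [Finset.mem_filter, Finset.mem_univ, true_and] at *
  exact hj.2

lemma cnt'_le_pred (i : Fin n) (k : ℕ) :
    (Finset.univ.filter (fun j : Fin n => j ≠ i ∧ x j ≤ α k)).card ≤ n - 1 := by
  have h1 : (Finset.univ.filter (fun j : Fin n => j ≠ i ∧ x j ≤ α k)) ⊆ Finset.univ.erase i := by
    intro j hj
    simp only [Finset.mem_filter] at hj
    exact Finset.mem_erase.2 ⟨hj.2.1, Finset.mem_univ j⟩
  calc _ ≤ (Finset.univ.erase i).card := Finset.card_le_card h1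
    _ = n - 1 := by rw [Finset.card_erase_of_mem (Finset.mem_univ i), Finset.card_univ,
      Fintype.card_fin]

lemma rm_le_sd (i : Fin n) (x : Fin n → ℝ) : rminus n i x α ≤ stepdownCount n x α := by
  apply fg_ge' (P := (fun k => ∀ i, 1 ≤ i → i ≤ k →
      i ≤ (Finset.univ.filter (fun j : Fin n => x j ≤ α i)).card)) _ (rm_le i x)
  intro k' h1 h2
  exact le_trans (rm_spec i x k' h1 h2) (cnt'_le_cnt i k')

lemma rm_lt (i : Fin n) (x : Fin n → ℝ) : rminus n i x α < n := by
  have hn : 0 < n := i.pos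
  rcases Nat.lt_or_ge (rminus n i x α) n with h | h
  · exact h
  · exfalso
    have h2 := rm_spec i x n hn h
    have h3 := cnt'_le_pred (α := α) (x := x) i n
    omega

lemma cnt_succ_le (hR : stepdownCount n x α < n) :
    (Finset.univ.filter (fun j : Fin n => x j ≤ α (stepdownCount n x α + 1))).card ≤
      stepdownCount n x α := by
  by_contra hc
  push_neg at hc
  set R := stepdownCount n x α with hRdef
  have hQ : ∀ i, 1 ≤ i → i ≤ R + 1 →
      i ≤ (Finset.univ.filter (fun j : Fin n => x j ≤ α i)).card := by
    intro i h1 h2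
    rcases Nat.lt_or_ge i (R + 1) with h | h
    · exact sd_spec x i h1 (by omega)
    · have hi : i = R + 1 := by omega
      subst hi
      omega
  have : R + 1 ≤ stepdownCount n x α := fg_ge' (P := (fun k => ∀ i, 1 ≤ i → i ≤ k →
      i ≤ (Finset.univ.filter (fun j : Fin n => x j ≤ α i)).card)) _ (by omega) hQ
  omega

lemma cnt_R_eq (hmono : Monotone α) (hR : stepdownCount n x α < n) :
    (Finset.univ.filter (fun j : Fin n => x j ≤ α (stepdownCount n x α))).card =
      stepdownCount n x α := by
  have hle : (Finset.univ.filter (fun j : Fin n => x j ≤ α (stepdownCount n x α))).card ≤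
      stepdownCount n x α :=
    le_trans (cnt_mono hmono x (Nat.le_succ _)) (cnt_succ_le hR)
  rcases Nat.eq_zero_or_pos (stepdownCount n x α) with h0 | h0
  · omega
  · have := sd_spec x (stepdownCount n x α) h0 le_rfl
    omega

lemma rej_main (hmono : Monotone α) (i : Fin n)
    (hx : x i ≤ α (stepdownCount n x α)) :
    1 ≤ stepdownCount n x α ∧ rminus n i x α + 1 ≤ stepdownCount n x α ∧
      x i ≤ α (rminus n i x α + 1) := by
  have h1 : 1 ≤ stepdownCount n x α := by
    by_contra hR0
    have hR0' : stepdownCount n x α = 0 := by omega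
    have hx1 : x i ≤ α 1 := le_trans hx (by rw [hR0']; exact hmono (Nat.zero_le 1))
    have hQ1 : ∀ k', 1 ≤ k' → k' ≤ 1 →
        k' ≤ (Finset.univ.filter (fun j : Fin n => x j ≤ α k')).card := by
      intro k' hk1 hk2
      have hk : k' = 1 := by omega
      subst hk
      have hmem : i ∈ Finset.univ.filter (fun j : Fin n => x j ≤ α 1) :=
        Finset.mem_filter.2 ⟨Finset.mem_univ i, hx1⟩
      exact Finset.card_pos.2 ⟨i, hmem⟩
    have : 1 ≤ stepdownCount n x α := fg_ge' (P := (fun k => ∀ i, 1 ≤ i → i ≤ k →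
      i ≤ (Finset.univ.filter (fun j : Fin n => x j ≤ α i)).card)) _ i.pos hQ1
    omega
  have h2 : rminus n i x α + 1 ≤ stepdownCount n x α := by
    by_contra hc
    have hc' : stepdownCount n x α ≤ rminus n i x α := by omega
    have hsp := rm_spec i x (stepdownCount n x α) h1 hc'
    have hcnt : (Finset.univ.filter (fun j : Fin n => x j ≤ α (stepdownCount n x α))).card =
        (Finset.univ.filter
          (fun j : Fin n => j ≠ i ∧ x j ≤ α (stepdownCount n x α))).card + 1 := by
      rw [← Finset.card_insert_of_notMem (s := Finset.univ.filter
        (fun j : Fin n => j ≠ i ∧ x j ≤ α (stepdownCount n x α))) (a := i) (by simp)]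
      congr 1
      ext j
      simp only [Finset.mem_filter, Finset.mem_univ, true_and, Finset.mem_insert]
      by_cases hj : j = i
      · subst hj; simp [hx]
      · simp [hj]
    rcases Nat.lt_or_ge (stepdownCount n x α) n with hRn | hRn
    · have := cnt_R_eq hmono hRn
      omega
    · have hRn' : stepdownCount n x α = n := le_antisymm (sd_le x) hRn
      have h4 := cnt'_le_pred (α := α) (x := x) i (stepdownCount n x α)
      have hn : 0 < n := i.pos
      omega
  have h3 : x i ≤ α (rminus n i x α + 1) := by
    by_contra hc
    push_neg at hc
    have key : ∀ k', 1 ≤ k' → k' ≤ rminus n i x α + 1 →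
        k' ≤ (Finset.univ.filter (fun j : Fin n => j ≠ i ∧ x j ≤ α k')).card := by
      intro k' hk1 hk2
      have hgt : α k' < x i := lt_of_le_of_lt (hmono hk2) hc
      have heq : (Finset.univ.filter (fun j : Fin n => j ≠ i ∧ x j ≤ α k')) =
          (Finset.univ.filter (fun j : Fin n => x j ≤ α k')) := by
        ext j
        simp only [Finset.mem_filter, Finset.mem_univ, true_and]
        by_cases hj : j = i
        · subst hj; simp [not_le.mpr hgt]
        · simp [hj]
      rw [heq]
      exact sd_spec x k' hk1 (le_trans hk2 h2)
    have hb : rminus n i x α + 1 ≤ n := le_trans h2 (sd_le x)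
    have : rminus n i x α + 1 ≤ rminus n i x α := fg_ge' (P := (fun k => ∀ k', 1 ≤ k' → k' ≤ k →
      k' ≤ (Finset.univ.filter (fun j : Fin n => j ≠ i ∧ x j ≤ α k')).card)) _ hb key
    omega
  exact ⟨h1, h2, h3⟩

end Det
section WB
variable {n : ℕ} {α : ℕ → ℝ}

/-- Key pointwise bound: the weighted count of non-rejected null indices is at most 1. -/
lemma Wsum_le_one (H₀ : Finset (Fin n)) (hmono : Monotone α) (x : Fin n → ℝ) :
    ∑ i ∈ H₀, (if α (rminus n i x α + 1) < x i
      then ((n:ℝ) + 1 - ((rminus n i x α + 1 : ℕ) : ℝ))⁻¹ else 0) ≤ 1 := by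
  rcases Nat.eq_zero_or_pos n with hn | hn
  · subst hn
    have : H₀ = ∅ := Finset.eq_empty_of_isEmpty H₀
    simp [this]
  rcases Nat.lt_or_ge (stepdownCount n x α) n with hRn | hRn
  · -- R < n
    have hcard := cnt_R_eq (x := x) hmono hRn
    have hRpos : (0:ℝ) < (n:ℝ) - (stepdownCount n x α : ℝ) := by
      have := hRn; rw [sub_pos]; exact_mod_cast this
    have hterm : ∀ i ∈ H₀,
        (if α (rminus n i x α + 1) < x i
          then ((n:ℝ) + 1 - ((rminus n i x α + 1 : ℕ) : ℝ))⁻¹ else 0) ≤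
        (if ¬ x i ≤ α (stepdownCount n x α)
          then ((n:ℝ) - (stepdownCount n x α : ℝ))⁻¹ else 0) := by
      intro i _
      by_cases hc : α (rminus n i x α + 1) < x i
      · have hnr : ¬ x i ≤ α (stepdownCount n x α) := by
          intro hrej
          exact absurd (rej_main hmono i hrej).2.2 (not_le.mpr hc)
        rw [if_pos hc, if_pos hnr]
        have h2 : rminus n i x α ≤ stepdownCount n x α := rm_le_sd i x
        have hle : (n:ℝ) - (stepdownCount n x α : ℝ) ≤
            (n:ℝ) + 1 - ((rminus n i x α + 1 : ℕ) : ℝ) := by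
          push_cast
          have : (rminus n i x α : ℝ) ≤ (stepdownCount n x α : ℝ) := by exact_mod_cast h2
          linarith
        exact inv_anti₀ hRpos hle
      · rw [if_neg hc]
        split_ifs
        all_goals first
          | exact le_refl (0:ℝ)
          | exact inv_nonneg.mpr (le_of_lt hRpos)
    calc ∑ i ∈ H₀, (if α (rminus n i x α + 1) < x i
          then ((n:ℝ) + 1 - ((rminus n i x α + 1 : ℕ) : ℝ))⁻¹ else 0)
        ≤ ∑ i ∈ H₀, (if ¬ x i ≤ α (stepdownCount n x α)
          then ((n:ℝ) - (stepdownCount n x α : ℝ))⁻¹ else 0) := Finset.sum_le_sum hterm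
      _ = ((H₀.filter (fun i => ¬ x i ≤ α (stepdownCount n x α))).card : ℝ) *
            ((n:ℝ) - (stepdownCount n x α : ℝ))⁻¹ := by
          rw [Finset.sum_ite, Finset.sum_const, Finset.sum_const_zero, add_zero,
            nsmul_eq_mul]
      _ ≤ 1 := by
          have hsub : (H₀.filter (fun i => ¬ x i ≤ α (stepdownCount n x α))).card +
              stepdownCount n x α ≤ n := by
            have hdisj : Disjoint (H₀.filter (fun i => ¬ x i ≤ α (stepdownCount n x α)))
                (Finset.univ.filter (fun j : Fin n => x j ≤ α (stepdownCount n x α))) := by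
              rw [Finset.disjoint_left]
              intro a ha hb
              exact (Finset.mem_filter.1 ha).2 (Finset.mem_filter.1 hb).2
            have hunion := Finset.card_union_of_disjoint hdisj
            have hle : (H₀.filter (fun i => ¬ x i ≤ α (stepdownCount n x α)) ∪
                Finset.univ.filter (fun j : Fin n => x j ≤ α (stepdownCount n x α))).card ≤ n := by
              calc (H₀.filter (fun i => ¬ x i ≤ α (stepdownCount n x α)) ∪
                  Finset.univ.filter (fun j : Fin n => x j ≤ α (stepdownCount n x α))).card
                  ≤ (Finset.univ : Finset (Fin n)).card :=
                    Finset.card_le_card (Finset.subset_univ _)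
                _ = n := by rw [Finset.card_univ, Fintype.card_fin]
            rw [hunion] at hle
            rw [hcard] at hle
            exact hle
          have hcast : ((H₀.filter (fun i => ¬ x i ≤ α (stepdownCount n x α))).card : ℝ) ≤
              (n:ℝ) - (stepdownCount n x α : ℝ) := by
            have h7 := (Nat.cast_le (α := ℝ)).2 hsub
            push_cast at h7
            linarith
          calc ((H₀.filter (fun i => ¬ x i ≤ α (stepdownCount n x α))).card : ℝ) *
                ((n:ℝ) - (stepdownCount n x α : ℝ))⁻¹
              ≤ ((n:ℝ) - (stepdownCount n x α : ℝ)) *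
                ((n:ℝ) - (stepdownCount n x α : ℝ))⁻¹ :=
                mul_le_mul_of_nonneg_right hcast (inv_nonneg.mpr (le_of_lt hRpos))
            _ = 1 := mul_inv_cancel₀ (ne_of_gt hRpos)
  · -- R = n : everything rejected, all terms vanish
    have hRn' : stepdownCount n x α = n := le_antisymm (sd_le x) hRn
    have hcard : n ≤ (Finset.univ.filter (fun j : Fin n => x j ≤ α n)).card :=
      sd_spec (α := α) x n hn hRn
    have huniv : (Finset.univ.filter (fun j : Fin n => x j ≤ α n)) = Finset.univ := by
      apply Finset.eq_univ_of_card
      rw [Fintype.card_fin]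
      exact le_antisymm (by
        calc (Finset.univ.filter (fun j : Fin n => x j ≤ α n)).card
            ≤ (Finset.univ : Finset (Fin n)).card := Finset.card_le_card (Finset.filter_subset _ _)
          _ = n := by rw [Finset.card_univ, Fintype.card_fin]) hcard
    have hall : ∀ j : Fin n, x j ≤ α (stepdownCount n x α) := by
      intro j
      have : j ∈ Finset.univ.filter (fun j : Fin n => x j ≤ α n) := by
        rw [huniv]; exact Finset.mem_univ j
      rw [hRn']
      exact (Finset.mem_filter.1 this).2
    apply le_trans (le_of_eq (Finset.sum_eq_zero ?_)) zero_le_one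
    intro i _
    have h3 := (rej_main hmono i (hall i)).2.2
    rw [if_neg (not_lt.mpr h3)]

end WB
section Meas
variable {n : ℕ} {α : ℕ → ℝ}

lemma meas_fg {δ : Type*} [MeasurableSpace δ] {p : δ → ℕ → Prop}
    (hp : ∀ k, MeasurableSet {x | p x k}) (b : ℕ) :
    Measurable fun x => Nat.findGreatest (p x) b := by
  induction b with
  | zero => simp only [Nat.findGreatest_zero]; exact measurable_const
  | succ b ih =>
    have heq : (fun x => Nat.findGreatest (p x) (b+1))
        = fun x => if p x (b+1) then b+1 else Nat.findGreatest (p x) b := by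
      funext x; exact Nat.findGreatest_succ b
    rw [heq]
    exact Measurable.ite (hp (b+1)) measurable_const ih

lemma meas_cnt' (i : Fin n) (k' : ℕ) :
    Measurable (fun x : Fin n → ℝ =>
      (Finset.univ.filter (fun j : Fin n => j ≠ i ∧ x j ≤ α k')).card) := by
  simp_rw [Finset.card_filter]
  apply Finset.measurable_sum
  intro j _
  apply Measurable.ite _ measurable_const measurable_const
  by_cases hj : j = i
  · subst hj; simp
  · have heq : {x : Fin n → ℝ | j ≠ i ∧ x j ≤ α k'} = {x : Fin n → ℝ | x j ≤ α k'} := by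
      ext x; simp [hj]
    rw [heq]
    exact measurableSet_le (measurable_pi_apply j) measurable_const

lemma meas_rminus (i : Fin n) :
    Measurable (fun x : Fin n → ℝ => rminus n i x α) := by
  have hp : ∀ k, MeasurableSet {x : Fin n → ℝ | ∀ k', 1 ≤ k' → k' ≤ k →
      k' ≤ (Finset.univ.filter (fun j : Fin n => j ≠ i ∧ x j ≤ α k')).card} := by
    intro k
    have heq : {x : Fin n → ℝ | ∀ k', 1 ≤ k' → k' ≤ k →
        k' ≤ (Finset.univ.filter (fun j : Fin n => j ≠ i ∧ x j ≤ α k')).card}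
        = ⋂ (k' : ℕ), ⋂ (_ : 1 ≤ k'), ⋂ (_ : k' ≤ k),
          {x : Fin n → ℝ |
            k' ≤ (Finset.univ.filter (fun j : Fin n => j ≠ i ∧ x j ≤ α k')).card} := by
      ext x; simp only [Set.mem_iInter, Set.mem_setOf_eq]
    rw [heq]
    exact MeasurableSet.iInter fun k' => MeasurableSet.iInter fun _ =>
      MeasurableSet.iInter fun _ => (meas_cnt' i k') measurableSet_Ici
  exact meas_fg hp n

lemma rminus_congr (i : Fin n) {x y : Fin n → ℝ} (h : ∀ j, j ≠ i → x j = y j) :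
    rminus n i x α = rminus n i y α := by
  have hcnt : ∀ k' : ℕ, (Finset.univ.filter (fun j : Fin n => j ≠ i ∧ x j ≤ α k'))
      = (Finset.univ.filter (fun j : Fin n => j ≠ i ∧ y j ≤ α k')) := by
    intro k'
    apply Finset.filter_congr
    intro j _
    by_cases hj : j = i
    · simp [hj]
    · rw [h j hj]
  unfold rminus
  simp_rw [hcnt]
  exact congrArg (fun inst => @Nat.findGreatest _ inst n) (Subsingleton.elim _ _)

end Meas
noncomputable def auxf (n D : ℕ) (α : ℕ → ℝ) {Ω : Type*} [MeasurableSpace Ω]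
    (P : Fin n → Ω → ℝ) (i : Fin n) (ω : Ω) : ℝ :=
  ∑ k ∈ Finset.Icc 1 n,
    ({ω' | rminus n i (fun j => P j ω') α + 1 = k} ∩ {ω' | P i ω' ≤ α k}).indicator
      (fun _ => ((D:ℝ) + (k:ℝ))⁻¹) ω

noncomputable def auxg (n : ℕ) (α : ℕ → ℝ) {Ω : Type*} [MeasurableSpace Ω]
    (P : Fin n → Ω → ℝ) (i : Fin n) (ω : Ω) : ℝ :=
  ∑ k ∈ Finset.Icc 1 n,
    ({ω' | rminus n i (fun j => P j ω') α + 1 = k} ∩ {ω' | α k < P i ω'}).indicator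
      (fun _ => ((n:ℝ) + 1 - (k:ℝ))⁻¹) ω

section Main

variable {Ω : Type*} [MeasurableSpace Ω] {μ : Measure Ω} {n D : ℕ} {α : ℕ → ℝ}
  {P : Fin n → Ω → ℝ}

lemma measA (hmeas : ∀ j, Measurable (P j)) (i : Fin n) (k : ℕ) :
    MeasurableSet {ω' : Ω | rminus n i (fun j => P j ω') α + 1 = k} := by
  have h1 : Measurable (fun ω : Ω => rminus n i (fun j => P j ω) α + 1) :=
    measurable_from_top.comp ((meas_rminus (α := α) i).comp (measurable_pi_lambda _ hmeas))
  exact h1 (measurableSet_singleton k)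

lemma measB (hmeas : ∀ j, Measurable (P j)) (i : Fin n) (k : ℕ) :
    MeasurableSet {ω' : Ω | P i ω' ≤ α k} :=
  (hmeas i) measurableSet_Iic

lemma measC (hmeas : ∀ j, Measurable (P j)) (i : Fin n) (k : ℕ) :
    MeasurableSet {ω' : Ω | α k < P i ω'} :=
  (hmeas i) measurableSet_Ioi

lemma auxf_integrable [IsProbabilityMeasure μ] (hmeas : ∀ j, Measurable (P j)) (i : Fin n) :
    Integrable (auxf n D α P i) μ := by
  unfold auxf
  exact integrable_finset_sum _ (fun k _ =>
    (integrable_const _).indicator ((measA hmeas i k).inter (measB hmeas i k)))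

lemma auxg_integrable [IsProbabilityMeasure μ] (hmeas : ∀ j, Measurable (P j)) (i : Fin n) :
    Integrable (auxg n α P i) μ := by
  unfold auxg
  exact integrable_finset_sum _ (fun k _ =>
    (integrable_const _).indicator ((measA hmeas i k).inter (measC hmeas i k)))

lemma auxf_nonneg (i : Fin n) (ω : Ω) : 0 ≤ auxf n D α P i ω :=
  Finset.sum_nonneg fun k _ => Set.indicator_nonneg (fun _ _ => by positivity) ω

lemma indep_rminus (hmeas : ∀ j, Measurable (P j))
    (hindep : iIndepFun P μ) (i : Fin n) :
    IndepFun (P i) (fun ω => rminus n i (fun j => P j ω) α + 1) μ := by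
  have h0 := hindep.indepFun_finset {i} {i}ᶜ disjoint_compl_right hmeas
  have hext : Measurable (fun (y : ({i}ᶜ : Finset (Fin n)) → ℝ) (j : Fin n) =>
      if h : j ∈ ({i}ᶜ : Finset (Fin n)) then y ⟨j, h⟩ else 0) := by
    apply measurable_pi_lambda
    intro j
    by_cases hj : j ∈ ({i}ᶜ : Finset (Fin n))
    · simp only [dif_pos hj]
      exact measurable_pi_apply _
    · simp only [dif_neg hj]
      exact measurable_const
  have hφ2 : Measurable (fun (y : ({i}ᶜ : Finset (Fin n)) → ℝ) =>
      rminus n i (fun j => if h : j ∈ ({i}ᶜ : Finset (Fin n)) then y ⟨j, h⟩ else 0) α + 1) :=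
    measurable_from_top.comp ((meas_rminus (α := α) i).comp hext)
  have hφ1 : Measurable (fun (y : ({i} : Finset (Fin n)) → ℝ) =>
      y ⟨i, Finset.mem_singleton_self i⟩) := measurable_pi_apply _
  have h1 := h0.comp hφ1 hφ2
  have e1 : (fun (y : ({i} : Finset (Fin n)) → ℝ) => y ⟨i, Finset.mem_singleton_self i⟩) ∘
      (fun ω (j : ({i} : Finset (Fin n))) => P j ω) = P i := rfl
  have e2 : (fun (y : ({i}ᶜ : Finset (Fin n)) → ℝ) =>
      rminus n i (fun j => if h : j ∈ ({i}ᶜ : Finset (Fin n)) then y ⟨j, h⟩ else 0) α + 1) ∘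
      (fun ω (j : ({i}ᶜ : Finset (Fin n))) => P j ω)
      = (fun ω => rminus n i (fun j => P j ω) α + 1) := by
    funext ω
    simp only [Function.comp_apply]
    congr 1
    apply rminus_congr
    intro j hj
    rw [dif_pos (Finset.mem_compl.mpr (by simp [hj]))]
  rw [e1, e2] at h1
  exact h1

end Main
/-- Single-level FAR bound (display (A.2) of Theorem 1's proof): for `n` independent
p-values with nulls `H₀` uniform on `[0,1]`, nondecreasing thresholds satisfying
`α_k/(D+k) ≤ q(1-α_k)/(n+1-k)`, step-down rejection count `d`, and
`V = #{j ∈ H₀ : P_j ≤ α_d}` false rejections, we have `E[V/(D + max(d,1))] ≤ q`. -/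
theorem single_level_far_bound {Ω : Type*} [MeasurableSpace Ω] (μ : Measure Ω)
    [IsProbabilityMeasure μ] (n D : ℕ) (q : ℝ) (hq : q ∈ Set.Ioo (0:ℝ) 1)
    (P : Fin n → Ω → ℝ) (hmeas : ∀ j, Measurable (P j))
    (hindep : iIndepFun P μ)
    (H₀ : Finset (Fin n))
    (hunif : ∀ j ∈ H₀, Measure.map (P j) μ = volume.restrict (Set.Icc (0:ℝ) 1))
    (α : ℕ → ℝ) (hα01 : ∀ k, α k ∈ Set.Ioo (0:ℝ) 1) (hαmono : Monotone α)
    (hαq : ∀ k, 1 ≤ k → k ≤ n →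
      α k / ((D : ℝ) + (k : ℝ)) ≤ q * (1 - α k) / ((n : ℝ) + 1 - (k : ℝ))) :
    (∫ ω,
        ((H₀.filter (fun j =>
            P j ω ≤ α (stepdownCount n (fun j' => P j' ω) α))).card : ℝ) /
          ((D : ℝ) + max ((stepdownCount n (fun j' => P j' ω) α : ℝ)) 1) ∂μ) ≤ q := by
  -- measures of the half-line events
  have hμB : ∀ i ∈ H₀, ∀ k : ℕ, μ {ω | P i ω ≤ α k} = ENNReal.ofReal (α k) := by
    intro i hi k
    have h1 : {ω | P i ω ≤ α k} = P i ⁻¹' (Set.Iic (α k)) := rfl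
    rw [h1, ← Measure.map_apply (hmeas i) measurableSet_Iic, hunif i hi,
      Measure.restrict_apply measurableSet_Iic]
    have h2 : Set.Iic (α k) ∩ Set.Icc 0 1 = Set.Icc 0 (α k) := by
      ext z
      simp only [Set.mem_inter_iff, Set.mem_Iic, Set.mem_Icc]
      constructor
      · rintro ⟨h3, h4, h5⟩; exact ⟨h4, h3⟩
      · rintro ⟨h3, h4⟩; exact ⟨h4, h3, h4.trans (hα01 k).2.le⟩
    rw [h2, Real.volume_Icc, sub_zero]
  have hμC : ∀ i ∈ H₀, ∀ k : ℕ, μ {ω | α k < P i ω} = ENNReal.ofReal (1 - α k) := by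
    intro i hi k
    have h1 : {ω | α k < P i ω} = P i ⁻¹' (Set.Ioi (α k)) := rfl
    rw [h1, ← Measure.map_apply (hmeas i) measurableSet_Ioi, hunif i hi,
      Measure.restrict_apply measurableSet_Ioi]
    have h2 : Set.Ioi (α k) ∩ Set.Icc 0 1 = Set.Ioc (α k) 1 := by
      ext z
      simp only [Set.mem_inter_iff, Set.mem_Ioi, Set.mem_Icc, Set.mem_Ioc]
      constructor
      · rintro ⟨h3, h4, h5⟩; exact ⟨h3, h5⟩
      · rintro ⟨h3, h4⟩; exact ⟨h3, ((hα01 k).1.le).trans h3.le, h4⟩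
    rw [h2, Real.volume_Ioc]
  -- pointwise bound: integrand ≤ ∑ auxf
  have hpt1 : ∀ ω, ((H₀.filter (fun j =>
      P j ω ≤ α (stepdownCount n (fun j' => P j' ω) α))).card : ℝ) /
      ((D : ℝ) + max ((stepdownCount n (fun j' => P j' ω) α : ℝ)) 1)
      ≤ ∑ i ∈ H₀, auxf n D α P i ω := by
    intro ω
    rw [div_eq_mul_inv]
    have hcard : ((H₀.filter (fun j =>
        P j ω ≤ α (stepdownCount n (fun j' => P j' ω) α))).card : ℝ)
        = ∑ i ∈ H₀,
          (if P i ω ≤ α (stepdownCount n (fun j' => P j' ω) α) then (1:ℝ) else 0) := by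
      rw [Finset.card_filter, Nat.cast_sum]
      apply Finset.sum_congr rfl
      intro i _
      split_ifs <;> simp
    rw [hcard, Finset.sum_mul]
    apply Finset.sum_le_sum
    intro i _
    by_cases hrej : P i ω ≤ α (stepdownCount n (fun j' => P j' ω) α)
    · rw [if_pos hrej, one_mul]
      obtain ⟨h1, h2, h3⟩ := rej_main (x := fun j' => P j' ω) hαmono i hrej
      have hmax : max ((stepdownCount n (fun j' => P j' ω) α : ℝ)) 1
          = ((stepdownCount n (fun j' => P j' ω) α : ℝ)) :=
        max_eq_left (by exact_mod_cast h1)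
      rw [hmax]
      have hkmem : rminus n i (fun j' => P j' ω) α + 1 ∈ Finset.Icc 1 n :=
        Finset.mem_Icc.2 ⟨Nat.le_add_left 1 _, Nat.succ_le_of_lt (rm_lt i _)⟩
      have hstep : ((D:ℝ) + ((stepdownCount n (fun j' => P j' ω) α : ℕ) : ℝ))⁻¹ ≤
          ((D:ℝ) + ((rminus n i (fun j' => P j' ω) α + 1 : ℕ) : ℝ))⁻¹ := by
        have hd0 : (0:ℝ) ≤ (D:ℝ) := Nat.cast_nonneg D
        have hpos : (0:ℝ) < ((rminus n i (fun j' => P j' ω) α + 1 : ℕ) : ℝ) := by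
          exact_mod_cast Nat.succ_pos _
        have hle2 : ((rminus n i (fun j' => P j' ω) α + 1 : ℕ) : ℝ) ≤
            ((stepdownCount n (fun j' => P j' ω) α : ℕ) : ℝ) := by exact_mod_cast h2
        apply inv_anti₀ <;> linarith
      calc ((D:ℝ) + ((stepdownCount n (fun j' => P j' ω) α : ℕ) : ℝ))⁻¹
          ≤ ((D:ℝ) + ((rminus n i (fun j' => P j' ω) α + 1 : ℕ) : ℝ))⁻¹ := hstep
        _ = ({ω' | rminus n i (fun j => P j ω') α + 1
                = rminus n i (fun j' => P j' ω) α + 1}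
              ∩ {ω' | P i ω' ≤ α (rminus n i (fun j' => P j' ω) α + 1)}).indicator
              (fun _ => ((D:ℝ) + ((rminus n i (fun j' => P j' ω) α + 1 : ℕ) : ℝ))⁻¹) ω := by
            have hmem : ω ∈ ({ω' | rminus n i (fun j => P j ω') α + 1
                = rminus n i (fun j' => P j' ω) α + 1}
              ∩ {ω' | P i ω' ≤ α (rminus n i (fun j' => P j' ω) α + 1)}) := ⟨rfl, h3⟩
            rw [Set.indicator_of_mem hmem]
        _ ≤ auxf n D α P i ω := by
            unfold auxf
            exact Finset.single_le_sum
              (f := fun k => ({ω' | rminus n i (fun j => P j ω') α + 1 = k}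
                ∩ {ω' | P i ω' ≤ α k}).indicator (fun _ => ((D:ℝ) + (k:ℝ))⁻¹) ω)
              (fun k _ => Set.indicator_nonneg (fun _ _ => by positivity) ω) hkmem
    · rw [if_neg hrej, zero_mul]
      exact auxf_nonneg i ω
  -- pointwise bound: ∑ auxg ≤ 1
  have hpt2 : ∀ ω, ∑ i ∈ H₀, auxg n α P i ω ≤ 1 := by
    intro ω
    have hgi : ∀ i ∈ H₀, auxg n α P i ω =
        (if α (rminus n i (fun j' => P j' ω) α + 1) < P i ω
          then ((n:ℝ) + 1 - ((rminus n i (fun j' => P j' ω) α + 1 : ℕ) : ℝ))⁻¹ else 0) := by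
      intro i _
      have hkmem : rminus n i (fun j' => P j' ω) α + 1 ∈ Finset.Icc 1 n :=
        Finset.mem_Icc.2 ⟨Nat.le_add_left 1 _, Nat.succ_le_of_lt (rm_lt i _)⟩
      unfold auxg
      rw [Finset.sum_eq_single_of_mem (rminus n i (fun j' => P j' ω) α + 1) hkmem
        (fun k _ hne => Set.indicator_of_notMem (fun hmem => hne hmem.1.symm) _)]
      by_cases hcnd : α (rminus n i (fun j' => P j' ω) α + 1) < P i ω
      · have hmem : ω ∈ ({ω' | rminus n i (fun j => P j ω') α + 1
              = rminus n i (fun j' => P j' ω) α + 1}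
            ∩ {ω' | α (rminus n i (fun j' => P j' ω) α + 1) < P i ω'}) := ⟨rfl, hcnd⟩
        rw [Set.indicator_of_mem hmem, if_pos hcnd]
      · rw [Set.indicator_of_notMem (fun hmem => hcnd hmem.2), if_neg hcnd]
    rw [Finset.sum_congr rfl hgi]
    exact Wsum_le_one H₀ hαmono (fun j => P j ω)
  -- per-i integral inequality
  have hint1 : ∀ i ∈ H₀, ∫ ω, auxf n D α P i ω ∂μ ≤ q * ∫ ω, auxg n α P i ω ∂μ := by
    intro i hi
    unfold auxf auxg
    rw [integral_finset_sum _ (fun k _ =>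
        (integrable_const _).indicator ((measA hmeas i k).inter (measB hmeas i k))),
      integral_finset_sum _ (fun k _ =>
        (integrable_const _).indicator ((measA hmeas i k).inter (measC hmeas i k))),
      Finset.mul_sum]
    apply Finset.sum_le_sum
    intro k hk
    obtain ⟨hk1, hk2⟩ := Finset.mem_Icc.1 hk
    rw [integral_indicator_const _ ((measA hmeas i k).inter (measB hmeas i k)),
      integral_indicator_const _ ((measA hmeas i k).inter (measC hmeas i k)),
      measureReal_def, measureReal_def]
    have hiB : μ ({ω' | rminus n i (fun j => P j ω') α + 1 = k} ∩ {ω' | P i ω' ≤ α k})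
        = μ {ω' | rminus n i (fun j => P j ω') α + 1 = k} * ENNReal.ofReal (α k) := by
      rw [Set.inter_comm]
      have hind := (indep_rminus (α := α) hmeas hindep i).measure_inter_preimage_eq_mul
        (Set.Iic (α k)) {k} measurableSet_Iic (measurableSet_singleton k)
      rw [show (P i ⁻¹' Set.Iic (α k)) = {ω' | P i ω' ≤ α k} from rfl,
        show ((fun ω => rminus n i (fun j => P j ω) α + 1) ⁻¹' {k})
          = {ω' | rminus n i (fun j => P j ω') α + 1 = k} from rfl] at hind
      rw [hind, hμB i hi k, mul_comm]
    have hiC : μ ({ω' | rminus n i (fun j => P j ω') α + 1 = k} ∩ {ω' | α k < P i ω'})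
        = μ {ω' | rminus n i (fun j => P j ω') α + 1 = k} * ENNReal.ofReal (1 - α k) := by
      rw [Set.inter_comm]
      have hind := (indep_rminus (α := α) hmeas hindep i).measure_inter_preimage_eq_mul
        (Set.Ioi (α k)) {k} measurableSet_Ioi (measurableSet_singleton k)
      rw [show (P i ⁻¹' Set.Ioi (α k)) = {ω' | α k < P i ω'} from rfl,
        show ((fun ω => rminus n i (fun j => P j ω) α + 1) ⁻¹' {k})
          = {ω' | rminus n i (fun j => P j ω') α + 1 = k} from rfl] at hind
      rw [hind, hμC i hi k, mul_comm]
    rw [hiB, hiC, ENNReal.toReal_mul, ENNReal.toReal_mul,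
      ENNReal.toReal_ofReal (hα01 k).1.le,
      ENNReal.toReal_ofReal (by linarith [(hα01 k).2] : (0:ℝ) ≤ 1 - α k),
      smul_eq_mul, smul_eq_mul]
    have ha : (0:ℝ) ≤ (μ {ω' | rminus n i (fun j => P j ω') α + 1 = k}).toReal :=
      ENNReal.toReal_nonneg
    have hq1 := hαq k hk1 hk2
    rw [div_eq_mul_inv, div_eq_mul_inv] at hq1
    nlinarith [mul_le_mul_of_nonneg_left hq1 ha]
  -- assemble
  have hsumf_int : Integrable (fun ω => ∑ i ∈ H₀, auxf n D α P i ω) μ :=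
    integrable_finset_sum _ (fun i _ => auxf_integrable hmeas i)
  have hsumg_int : Integrable (fun ω => ∑ i ∈ H₀, auxg n α P i ω) μ :=
    integrable_finset_sum _ (fun i _ => auxg_integrable hmeas i)
  calc (∫ ω, ((H₀.filter (fun j =>
          P j ω ≤ α (stepdownCount n (fun j' => P j' ω) α))).card : ℝ) /
          ((D : ℝ) + max ((stepdownCount n (fun j' => P j' ω) α : ℝ)) 1) ∂μ)
      ≤ ∫ ω, ∑ i ∈ H₀, auxf n D α P i ω ∂μ := by
        apply integral_mono_of_nonneg (ae_of_all _ (fun ω => ?_)) hsumf_int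
          (ae_of_all _ hpt1)
        have hd : (0:ℝ) ≤ (D : ℝ) + max ((stepdownCount n (fun j' => P j' ω) α : ℝ)) 1 := by
          have : (0:ℝ) ≤ max ((stepdownCount n (fun j' => P j' ω) α : ℝ)) 1 :=
            le_trans zero_le_one (le_max_right _ _)
          have hD : (0:ℝ) ≤ (D:ℝ) := Nat.cast_nonneg D
          linarith
        exact div_nonneg (Nat.cast_nonneg _) hd
    _ = ∑ i ∈ H₀, ∫ ω, auxf n D α P i ω ∂μ :=
        integral_finset_sum _ (fun i _ => auxf_integrable hmeas i)
    _ ≤ ∑ i ∈ H₀, q * ∫ ω, auxg n α P i ω ∂μ := Finset.sum_le_sum hint1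
    _ = q * ∑ i ∈ H₀, ∫ ω, auxg n α P i ω ∂μ := (Finset.mul_sum _ _ _).symm
    _ = q * ∫ ω, ∑ i ∈ H₀, auxg n α P i ω ∂μ := by
        rw [integral_finset_sum _ (fun i _ => auxg_integrable hmeas i)]
    _ ≤ q * 1 := by
        apply mul_le_mul_of_nonneg_left _ hq.1.le
        calc ∫ ω, ∑ i ∈ H₀, auxg n α P i ω ∂μ ≤ ∫ _ω, (1:ℝ) ∂μ :=
              integral_mono hsumg_int (integrable_const 1) hpt2
          _ = 1 := by simp
    _ = q := mul_one q
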